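/- Let r ∈ ℕ and h ∈ (0, 1), and define the half-needle polynomial k^h_r(t) := T_{2r}((2 + h − 2t)/(2 − h))² / T_{2r}((2 + h)/(2 − h))², where T_{2r} is the degree-2r Chebyshev polynomial of the first kind. Then: (i) k^h_r(0) = 1; (ii) 0 ≤ k^h_r(t) ≤ 1 for all t ∈ [0, 1]; (iii) k^h_r(t) ≤ 4 e^{−r√h/2} for all t ∈ [0, 1] with t ≥ h. -/

import Mathlib

open Polynomial

lemma cheb_half (n : ℕ) (u : ℝ) (hu : u ≠ 0) :
    Polynomial.eval ((u + u⁻¹)/2) (Polynomial.Chebyshev.T ℝ (n : ℤ)) = (u^n + (u⁻¹)^n)/2 := by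
  induction n using Nat.twoStepInduction with
  | zero => simp
  | one => simp [Polynomial.Chebyshev.T_one]
  | more n ih1 ih2 =>
    push_cast
    rw [Polynomial.Chebyshev.T_add_two]
    push_cast at ih1 ih2
    simp only [eval_mul, eval_sub, eval_X, eval_ofNat, ih1, ih2]
    field_simp
    have hu' : u * u⁻¹ = 1 := mul_inv_cancel₀ hu
    linear_combination (u⁻¹ ^ n * (u - u⁻¹)) * hu'

lemma cheb_formula (n : ℕ) (x : ℝ) (hx : 1 ≤ x) :
    Polynomial.eval x (Polynomial.Chebyshev.T ℝ (n : ℤ)) =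
      ((x + Real.sqrt (x^2-1))^n + ((x + Real.sqrt (x^2-1))^n)⁻¹)/2 := by
  set s := Real.sqrt (x^2-1) with hs
  have hs0 : 0 ≤ s := Real.sqrt_nonneg _
  have hssq : s^2 = x^2 - 1 := Real.sq_sqrt (by nlinarith)
  have hu1 : (1:ℝ) ≤ x + s := by linarith
  have hu0 : x + s ≠ 0 := by positivity
  have hmul : (x + s) * (x - s) = 1 := by nlinarith
  have hinv : (x + s)⁻¹ = x - s := inv_eq_of_mul_eq_one_right hmul
  have hx' : x = ((x + s) + (x + s)⁻¹)/2 := by rw [hinv]; ring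
  rw [show (Polynomial.eval x (Polynomial.Chebyshev.T ℝ (n : ℤ))) =
    Polynomial.eval (((x+s) + (x+s)⁻¹)/2) (Polynomial.Chebyshev.T ℝ (n : ℤ)) by rw [← hx'],
    cheb_half n _ hu0, inv_pow]

lemma aux_mono (a b : ℝ) (ha : 1 ≤ a) (hab : a ≤ b) : a + a⁻¹ ≤ b + b⁻¹ := by
  have ha0 : 0 < a := by linarith
  have hb0 : 0 < b := by linarith
  have key : b + b⁻¹ - (a + a⁻¹) = (b - a) * (a*b - 1) * (a⁻¹ * b⁻¹) := by
    field_simp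
    ring
  have hp : 0 ≤ (b - a) * (a*b - 1) * (a⁻¹ * b⁻¹) :=
    mul_nonneg (mul_nonneg (sub_nonneg.2 hab) (by nlinarith : (0:ℝ) ≤ a*b - 1))
      (mul_pos (inv_pos.2 ha0) (inv_pos.2 hb0)).le
  linarith [key ▸ hp]

lemma cheb_ge_one (n : ℕ) (x : ℝ) (hx : 1 ≤ x) :
    1 ≤ Polynomial.eval x (Polynomial.Chebyshev.T ℝ (n : ℤ)) := by
  rw [cheb_formula n x hx]
  have h1 : (1:ℝ) ≤ (x + Real.sqrt (x^2-1))^n :=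
    one_le_pow₀ (by have := Real.sqrt_nonneg (x^2-1); linarith)
  have h2 : 0 < (x + Real.sqrt (x^2-1))^n := by linarith
  have hc : (x + Real.sqrt (x^2-1))^n * ((x + Real.sqrt (x^2-1))^n)⁻¹ = 1 :=
    mul_inv_cancel₀ (ne_of_gt h2)
  nlinarith [sq_nonneg ((x + Real.sqrt (x^2-1))^n - 1)]

lemma cheb_mono (n : ℕ) (x y : ℝ) (hx : 1 ≤ x) (hxy : x ≤ y) :
    Polynomial.eval x (Polynomial.Chebyshev.T ℝ (n : ℤ)) ≤
      Polynomial.eval y (Polynomial.Chebyshev.T ℝ (n : ℤ)) := by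
  rw [cheb_formula n x hx, cheb_formula n y (by linarith)]
  have hsx := Real.sqrt_nonneg (x^2-1)
  have hs : Real.sqrt (x^2-1) ≤ Real.sqrt (y^2-1) := Real.sqrt_le_sqrt (by nlinarith)
  have hu : x + Real.sqrt (x^2-1) ≤ y + Real.sqrt (y^2-1) := by linarith
  have h1 : (1:ℝ) ≤ (x + Real.sqrt (x^2-1))^n :=
    one_le_pow₀ (by linarith)
  have := aux_mono _ _ h1 (pow_le_pow_left₀ (by linarith) hu n)
  linarith

lemma cheb_lower (n : ℕ) (x : ℝ) (hx : 1 ≤ x) :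
    (x + Real.sqrt (x^2-1))^n / 2 ≤ Polynomial.eval x (Polynomial.Chebyshev.T ℝ (n : ℤ)) := by
  rw [cheb_formula n x hx]
  have h1 : (1:ℝ) ≤ (x + Real.sqrt (x^2-1))^n :=
    one_le_pow₀ (by have := Real.sqrt_nonneg (x^2-1); linarith)
  have : 0 < ((x + Real.sqrt (x^2-1))^n)⁻¹ := by positivity
  linarith

lemma cheb_abs_le (n : ℤ) (x : ℝ) (h1 : -1 ≤ x) (h2 : x ≤ 1) :
    |Polynomial.eval x (Polynomial.Chebyshev.T ℝ n)| ≤ 1 := by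
  rw [← Real.cos_arccos h1 h2, Polynomial.Chebyshev.T_real_cos]
  exact Real.abs_cos_le_one _


lemma tail_bound (r m : ℕ) (hm_def : m = 2*r) (D u s : ℝ)
    (hs0 : 0 < s) (hs1 : s ≤ 1) (hu_lb : 1 + s ≤ u) (hD1 : 1 ≤ D)
    (hlow' : u^m / 2 ≤ D) :
    1 / D^2 ≤ 4 * Real.exp (-(1/2) * ((r:ℝ) * s)) := by
  have hu1 : (1:ℝ) ≤ u := by linarith
  have hD0 : (0:ℝ) < D := by linarith
  have hD2 : (0:ℝ) < D^2 := by positivity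
  have key : Real.exp (s/2) ≤ u^4 := by
    have e1 : Real.exp (-(s/2)) ≥ 1 - s/2 := by
      have := Real.add_one_le_exp (-(s/2)); linarith
    have hpos : (0:ℝ) < 1 - s/2 := by linarith
    have eone : Real.exp (s/2) * Real.exp (-(s/2)) = 1 := by
      rw [← Real.exp_add]; norm_num
    have e2 : Real.exp (s/2) ≤ (1 - s/2)⁻¹ := by
      have hprod : Real.exp (s/2) * (1 - s/2) ≤ 1 := by
        calc Real.exp (s/2) * (1 - s/2) ≤ Real.exp (s/2) * Real.exp (-(s/2)) :=
              mul_le_mul_of_nonneg_left e1 (Real.exp_pos _).le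
          _ = 1 := eone
      rw [inv_eq_one_div, le_div_iff₀ hpos]
      linarith
    have e3 : (1 - s/2)⁻¹ ≤ (1+s)^4 := by
      have h14 : (1:ℝ) ≤ (1+s)^4 * (1 - s/2) := by nlinarith [sq_nonneg s, sq_nonneg (1+s), pow_pos (by linarith : (0:ℝ) < 1+s) 4, sq_nonneg (s*(1-s))]
      rw [inv_eq_one_div, div_le_iff₀ hpos]
      linarith
    calc Real.exp (s/2) ≤ (1 - s/2)⁻¹ := e2
      _ ≤ (1+s)^4 := e3
      _ ≤ u^4 := pow_le_pow_left₀ (by linarith) hu_lb 4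
  have hE : Real.exp ((1/2) * ((r:ℝ) * s)) ≤ 4 * D^2 := by
    have e4 : Real.exp ((1/2) * ((r:ℝ) * s)) = (Real.exp (s/2))^r := by
      rw [← Real.exp_nat_mul]
      ring_nf
    have e5 : (Real.exp (s/2))^r ≤ (u^4)^r :=
      pow_le_pow_left₀ (Real.exp_pos _).le key r
    have e6 : (u^4)^r = (u^m)^2 := by
      rw [← pow_mul, ← pow_mul, hm_def]
      ring_nf
    have hum : (0:ℝ) < u^m := by positivity
    have e7 : (u^m)^2 ≤ 4 * D^2 := by nlinarith
    rw [e4]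
    calc (Real.exp (s/2))^r ≤ (u^4)^r := e5
      _ = (u^m)^2 := e6
      _ ≤ 4 * D^2 := e7
  have hEpos : 0 < Real.exp ((1/2) * ((r:ℝ) * s)) := Real.exp_pos _
  have hfinal : 1 / D^2 ≤ 4 * Real.exp (-(1/2) * ((r:ℝ) * s)) := by
    have hneg : Real.exp (-(1/2) * ((r:ℝ) * s)) =
        (Real.exp ((1/2) * ((r:ℝ) * s)))⁻¹ := by
      rw [← Real.exp_neg]
      ring_nf
    rw [hneg, div_le_iff₀ hD2]
    have h5 := mul_le_mul_of_nonneg_right hE (inv_nonneg.2 hEpos.le)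
    rw [mul_inv_cancel₀ (ne_of_gt hEpos)] at h5
    nlinarith
  exact hfinal

theorem stmt17 (r : ℕ) (h : ℝ) (hh : h ∈ Set.Ioo (0 : ℝ) 1)
    (halfneedle : ℝ → ℝ)
    (hhalfneedle : ∀ t : ℝ, halfneedle t =
      (Polynomial.eval ((2 + h - 2 * t) / (2 - h))
          (Polynomial.Chebyshev.T ℝ (2 * (r : ℤ)))) ^ 2 /
        (Polynomial.eval ((2 + h) / (2 - h))
          (Polynomial.Chebyshev.T ℝ (2 * (r : ℤ)))) ^ 2) :
    halfneedle 0 = 1 ∧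
    (∀ t ∈ Set.Icc (0 : ℝ) 1, 0 ≤ halfneedle t ∧ halfneedle t ≤ 1) ∧
    (∀ t ∈ Set.Icc (0 : ℝ) 1, h ≤ t →
      halfneedle t ≤ 4 * Real.exp (-(1 / 2) * (r * Real.sqrt h))) := by
  obtain ⟨h0, h1⟩ := hh
  have hd : (0:ℝ) < 2 - h := by linarith
  have hm : (2 * (r : ℤ)) = ((2*r : ℕ) : ℤ) := by push_cast; ring
  simp only [hm] at hhalfneedle
  set m : ℕ := 2*r with hm_def
  clear_value m
  set a : ℝ := (2+h)/(2-h) with ha_def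
  have ha1 : 1 ≤ a := (one_le_div hd).2 (by linarith)
  have haa : h ≤ a^2 - 1 := by
    rw [ha_def, div_pow, le_sub_iff_add_le, le_div_iff₀ (by positivity)]
    nlinarith [mul_pos h0 h0, mul_pos (mul_pos h0 h0) h0]
  set D : ℝ := Polynomial.eval a (Polynomial.Chebyshev.T ℝ (m:ℤ)) with hD_def
  have hD1 : 1 ≤ D := cheb_ge_one m a ha1
  have hD0 : 0 < D := by linarith
  have hD2 : (0:ℝ) < D^2 := by positivity
  have hmono : ∀ x : ℝ, 1 ≤ x → x ≤ a →
      Polynomial.eval x (Polynomial.Chebyshev.T ℝ (m:ℤ)) ≤ D := by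
    intro x hx hxa
    rw [hD_def]
    exact cheb_mono m x a hx hxa
  have hlow : (a + Real.sqrt (a^2-1))^m / 2 ≤ D := by
    rw [hD_def]; exact cheb_lower m a ha1
  clear_value D
  refine ⟨?_, ?_, ?_⟩
  · have e0 : (2 + h - 2*(0:ℝ))/(2-h) = a := by rw [ha_def]; ring
    rw [hhalfneedle, e0, ← hD_def]
    exact div_self (ne_of_gt hD2)
  · rintro t ⟨ht0, ht1⟩
    have hxa : (2 + h - 2*t)/(2-h) ≤ a := by
      rw [ha_def]; gcongr <;> linarith
    have hxpos : 0 < (2 + h - 2*t)/(2-h) := div_pos (by linarith) hd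
    constructor
    · rw [hhalfneedle]; positivity
    · rw [hhalfneedle, div_le_one hD2]
      rcases le_total ((2 + h - 2*t)/(2-h)) 1 with hc | hc
      · have habs := cheb_abs_le (m:ℤ) _ (by linarith) hc
        have hsq : (Polynomial.eval ((2 + h - 2*t)/(2-h))
            (Polynomial.Chebyshev.T ℝ (m:ℤ)))^2 ≤ 1 := by
          rw [← sq_abs]
          nlinarith [abs_nonneg (Polynomial.eval ((2 + h - 2*t)/(2-h))
            (Polynomial.Chebyshev.T ℝ (m:ℤ)))]
        nlinarith
      · have hTx1 : 1 ≤ Polynomial.eval ((2 + h - 2*t)/(2-h))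
            (Polynomial.Chebyshev.T ℝ (m:ℤ)) := cheb_ge_one m _ hc
        have := hmono _ hc hxa
        nlinarith
  · rintro t ⟨ht0, ht1⟩ hht
    have hx1 : (2 + h - 2*t)/(2-h) ≤ 1 := by
      rw [div_le_one hd]; linarith
    have hxpos : 0 < (2 + h - 2*t)/(2-h) := div_pos (by linarith) hd
    have habs := cheb_abs_le (m:ℤ) _ (by linarith : (-1:ℝ) ≤ (2 + h - 2*t)/(2-h)) hx1
    have hsq : (Polynomial.eval ((2 + h - 2*t)/(2-h))
        (Polynomial.Chebyshev.T ℝ (m:ℤ)))^2 ≤ 1 := by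
      rw [← sq_abs]
      nlinarith [abs_nonneg (Polynomial.eval ((2 + h - 2*t)/(2-h))
        (Polynomial.Chebyshev.T ℝ (m:ℤ)))]
    have step1 : halfneedle t ≤ 1 / D^2 := by
      rw [hhalfneedle]
      gcongr
    set s : ℝ := Real.sqrt h with hs_def
    have hs0 : 0 < s := Real.sqrt_pos.2 h0
    have hs1 : s ≤ 1 := Real.sqrt_le_one.mpr h1.le
    have hssq : s^2 = h := Real.sq_sqrt h0.le
    set u : ℝ := a + Real.sqrt (a^2 - 1) with hu_def
    have hsa : s ≤ Real.sqrt (a^2 - 1) := by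
      apply Real.le_sqrt' hs0 |>.2
      rw [hssq]; exact haa
    have hu_lb : 1 + s ≤ u := by rw [hu_def]; linarith
    have hu1 : (1:ℝ) ≤ u := by linarith
    have hlow' : u^m / 2 ≤ D := by rw [hu_def]; exact hlow
    clear_value s u a
    have hfinal := tail_bound r m hm_def D u s hs0 hs1 hu_lb hD1 hlow'
    exact step1.trans hfinal
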